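/- Let a₁, a₂, b₁, b₂ be nonzero integers and η ∈ (0,1). For any functions f : (ηN, N] ∩ ℤ → [−1,1] and g : [N] → [−1,1], we have ∫_𝕋 |f̃(a₁α) f̃(a₂α) ĝ(b₁α) ĝ(b₂α)| dα ≪_{b₁,b₂} η^{−1} N², where f̃(α) = Σ_x f(x) e(αx²) and ĝ(α) = Σ_x g(x) e(αx). -/

import Mathlib

open Complex Real Finset

lemma mmv_orth (m : ℤ) :
    ∫ α in (0:ℝ)..1, Complex.exp (2*Real.pi*Complex.I*(m*α)) = if m = 0 then 1 else 0 := by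
  rcases eq_or_ne m 0 with h | h
  · simp [h]
  · have hc : (2*Real.pi*Complex.I*m) ≠ 0 := by
      simp [Real.pi_ne_zero, Complex.I_ne_zero, h]
    rw [if_neg h]
    have h2 : ∀ α : ℝ, Complex.exp (2*Real.pi*Complex.I*(m*α))
        = Complex.exp ((2*Real.pi*Complex.I*m) * α) := by intro α; ring_nf
    simp_rw [h2]
    rw [integral_exp_mul_complex hc]
    have h3 : Complex.exp (2*Real.pi*Complex.I*m*((1:ℝ):ℂ)) = 1 := by
      push_cast
      rw [mul_one]
      have := Complex.exp_int_mul_two_pi_mul_I m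
      rw [← this]; ring_nf
    rw [h3]
    norm_num
lemma mmv_hdiff (a b : ℤ) (ha : a ≠ 0) (hb : b ≠ 0) (N : ℕ) (η : ℝ)
    (hη0 : 0 < η) (hN0 : (0:ℝ) < N)
    (x₁ y₁ x₂ y₂ : ℤ)
    (hx₁ : x₁ ∈ Finset.Ioc ⌊η * N⌋ (N:ℤ)) (hx₂ : x₂ ∈ Finset.Ioc ⌊η * N⌋ (N:ℤ))
    (hy₁ : y₁ ∈ Finset.Icc 1 (N:ℤ)) (hy₂ : y₂ ∈ Finset.Icc 1 (N:ℤ))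
    (heq : a * x₁ ^ 2 + b * y₁ = a * x₂ ^ 2 + b * y₂) :
    |x₁ - x₂| ≤ ⌊|(b:ℝ)| / (2*η)⌋ := by
  have hb1 : (1:ℤ) ≤ |b| := Int.one_le_abs hb
  have ha1 : (1:ℤ) ≤ |a| := Int.one_le_abs ha
  rw [Int.le_floor]
  rw [Finset.mem_Ioc] at hx₁ hx₂
  rw [Finset.mem_Icc] at hy₁ hy₂
  rcases eq_or_ne x₁ x₂ with h | h
  · simp only [h, sub_self, abs_zero, Int.cast_zero]
    positivity
  have hint : |x₁ ^ 2 - x₂ ^ 2| ≤ |b| * N := by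
    have h1 : |a| * |x₁ ^ 2 - x₂ ^ 2| = |b| * |y₂ - y₁| := by
      rw [← abs_mul, ← abs_mul]
      congr 1
      linarith
    have h2 : |y₂ - y₁| ≤ (N:ℤ) := by
      rw [abs_le]; omega
    nlinarith [abs_nonneg (x₁ ^ 2 - x₂ ^ 2), abs_nonneg (y₂ - y₁)]
  have hl₁ : η * N < (x₁:ℝ) := by
    calc η * N < (⌊η * N⌋ : ℝ) + 1 := Int.lt_floor_add_one _
      _ ≤ (x₁:ℝ) := by exact_mod_cast hx₁.1
  have hl₂ : η * N < (x₂:ℝ) := by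
    calc η * N < (⌊η * N⌋ : ℝ) + 1 := Int.lt_floor_add_one _
      _ ≤ (x₂:ℝ) := by exact_mod_cast hx₂.1
  have hsumpos : (0:ℝ) < (x₁:ℝ) + x₂ := by nlinarith
  have key : |(x₁:ℝ) - x₂| * (2*η) * N ≤ |(b:ℝ)| * N := by
    have hintR : |(x₁:ℝ) ^ 2 - (x₂:ℝ) ^ 2| ≤ |(b:ℝ)| * N := by
      have := hint
      have : ((|x₁ ^ 2 - x₂ ^ 2| : ℤ) : ℝ) ≤ ((|b| * N : ℤ) : ℝ) := by exact_mod_cast this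
      push_cast at this
      convert this using 2
    calc |(x₁:ℝ) - x₂| * (2*η) * N = |(x₁:ℝ) - x₂| * (2 * η * N) := by ring
      _ ≤ |(x₁:ℝ) - x₂| * ((x₁:ℝ) + x₂) := by
          apply mul_le_mul_of_nonneg_left (by nlinarith) (by positivity)
      _ = |(x₁:ℝ) - x₂| * |(x₁:ℝ) + x₂| := by
          rw [abs_of_pos hsumpos]
      _ = |(x₁:ℝ) ^ 2 - (x₂:ℝ) ^ 2| := by
          rw [← abs_mul]; congr 1; ring
      _ ≤ |(b:ℝ)| * N := hintR
  rw [le_div_iff₀ (by positivity : (0:ℝ) < 2*η)]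
  push_cast
  exact le_of_mul_le_mul_right key hN0

lemma mmv_count (a b : ℤ) (ha : a ≠ 0) (hb : b ≠ 0) (N : ℕ) (η : ℝ)
    (hη : η ∈ Set.Ioo (0:ℝ) 1) :
    ((((Finset.Ioc ⌊η * N⌋ (N:ℤ) ×ˢ Finset.Icc 1 (N:ℤ)) ×ˢ
        (Finset.Ioc ⌊η * N⌋ (N:ℤ) ×ˢ Finset.Icc 1 (N:ℤ))).filter
      (fun pq => a * pq.1.1^2 + b * pq.1.2 = a * pq.2.1^2 + b * pq.2.2)).card : ℝ)
      ≤ (|(b:ℝ)| + 1) * η⁻¹ * (N:ℝ)^2 := by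
  obtain ⟨hη0, hη1⟩ := hη
  have hηinv : (1:ℝ) ≤ η⁻¹ := one_le_inv_iff₀.2 ⟨hη0, le_of_lt hη1⟩
  rcases Nat.eq_zero_or_pos N with hN | hN
  · subst hN
    simp only [Nat.cast_zero, mul_zero, Int.floor_zero, Finset.Ioc_self,
      Finset.empty_product, Finset.product_empty, Finset.filter_empty,
      Finset.card_empty, Nat.cast_zero]
    positivity
  have hN0 : (0:ℝ) < N := by exact_mod_cast hN
  set A : Finset ℤ := Finset.Ioc ⌊η * N⌋ (N:ℤ) with hA
  set B : Finset ℤ := Finset.Icc 1 (N:ℤ) with hB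
  set K : ℤ := ⌊|(b:ℝ)| / (2*η)⌋ with hK
  have hb1 : (1:ℝ) ≤ |(b:ℝ)| := by
    have : (1:ℤ) ≤ |b| := Int.one_le_abs hb
    calc (1:ℝ) ≤ ((|b| : ℤ) : ℝ) := by exact_mod_cast this
    _ = |(b:ℝ)| := by push_cast; ring
  have hKpos : (0:ℝ) < |(b:ℝ)| / (2*η) := by positivity
  have hK0 : 0 ≤ K := Int.floor_nonneg.2 hKpos.le
  have hfl0 : (0:ℤ) ≤ ⌊η * N⌋ := Int.floor_nonneg.2 (by positivity)
  have hcard := Finset.card_le_card_of_injOn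
    (f := fun pq : (ℤ×ℤ)×(ℤ×ℤ) => ((pq.1.1, pq.1.1 - pq.2.1), pq.1.2))
    (s := ((A ×ˢ B) ×ˢ (A ×ˢ B)).filter
      (fun pq => a * pq.1.1^2 + b * pq.1.2 = a * pq.2.1^2 + b * pq.2.2))
    (t := (A ×ˢ Finset.Icc (-K) K) ×ˢ B)
    (by
      rintro ⟨⟨x₁, y₁⟩, ⟨x₂, y₂⟩⟩ hmem
      rw [Finset.mem_coe, Finset.mem_filter] at hmem
      obtain ⟨hmem, heq⟩ := hmem
      simp only [Finset.mem_product] at hmem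
      obtain ⟨⟨hx₁, hy₁⟩, hx₂, hy₂⟩ := hmem
      have hdiff := mmv_hdiff a b ha hb N η hη0 hN0 x₁ y₁ x₂ y₂ hx₁ hx₂ hy₁ hy₂ heq
      simp only [Finset.mem_coe, Finset.mem_product, Finset.mem_Icc]
      rw [abs_le] at hdiff
      exact ⟨⟨hx₁, hdiff.1, hdiff.2⟩, hy₁⟩)
    (by
      rintro ⟨⟨x₁, y₁⟩, ⟨x₂, y₂⟩⟩ hp ⟨⟨x₁', y₁'⟩, ⟨x₂', y₂'⟩⟩ hq himg
      simp only [Finset.coe_filter, Set.mem_setOf_eq, Finset.mem_product] at hp hq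
      simp only [Prod.mk.injEq] at himg
      obtain ⟨⟨he1, he2⟩, he3⟩ := himg
      have hx2 : x₂ = x₂' := by omega
      have hy2 : y₂ = y₂' := by
        subst he1 he3 hx2
        have hby : b * y₂ = b * y₂' := by linarith [hp.2, hq.2]
        exact mul_left_cancel₀ hb hby
      simp [he1, he3, hx2, hy2])
  -- card computations
  have hAcard : (A.card : ℝ) ≤ N := by
    have : A ⊆ Finset.Ioc 0 (N:ℤ) := Finset.Ioc_subset_Ioc_left hfl0
    have h1 : A.card ≤ (Finset.Ioc 0 (N:ℤ)).card := Finset.card_le_card this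
    have h2 : (Finset.Ioc 0 (N:ℤ)).card = N := by
      rw [Int.card_Ioc]; simp
    rw [h2] at h1
    exact_mod_cast h1
  have hBcard : (B.card : ℝ) ≤ N := by
    have h2 : B.card = N := by rw [hB, Int.card_Icc]; simp
    rw [h2]
  have hIcard : ((Finset.Icc (-K) K).card : ℝ) ≤ (|(b:ℝ)| + 1) * η⁻¹ := by
    have h2 : (Finset.Icc (-K) K).card = (2*K+1).toNat := by
      rw [Int.card_Icc]; congr 1; ring
    rw [h2]
    have h3 : ((2*K+1).toNat : ℝ) = 2*(K:ℝ)+1 := by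
      have h3' : ((2*K+1).toNat : ℤ) = 2*K+1 := Int.toNat_of_nonneg (by omega)
      calc ((2*K+1).toNat : ℝ) = (((2*K+1).toNat : ℤ) : ℝ) := by push_cast; ring
        _ = ((2*K+1 : ℤ):ℝ) := by rw [h3']
        _ = 2*(K:ℝ)+1 := by push_cast; ring
    rw [h3]
    have h4 : (K:ℝ) ≤ |(b:ℝ)| / (2*η) := Int.floor_le _
    have h5 : 2*(K:ℝ)+1 ≤ |(b:ℝ)| * η⁻¹ + 1 := by
      rw [div_eq_mul_inv] at h4
      have : (2*η)⁻¹ = 2⁻¹ * η⁻¹ := by rw [mul_inv]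
      rw [this] at h4
      nlinarith
    calc 2*(K:ℝ)+1 ≤ |(b:ℝ)| * η⁻¹ + 1 := h5
      _ ≤ |(b:ℝ)| * η⁻¹ + 1 * η⁻¹ := by nlinarith
      _ = (|(b:ℝ)| + 1) * η⁻¹ := by ring
  calc ((((A ×ˢ B) ×ˢ (A ×ˢ B)).filter
      (fun pq => a * pq.1.1^2 + b * pq.1.2 = a * pq.2.1^2 + b * pq.2.2)).card : ℝ)
      ≤ (((A ×ˢ Finset.Icc (-K) K) ×ˢ B).card : ℝ) := by exact_mod_cast hcard
    _ = (A.card : ℝ) * ((Finset.Icc (-K) K).card : ℝ) * (B.card : ℝ) := by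
        rw [Finset.card_product, Finset.card_product]; push_cast; ring
    _ ≤ (N:ℝ) * ((|(b:ℝ)| + 1) * η⁻¹) * N := by
        apply mul_le_mul _ hBcard (by positivity) (by positivity)
        apply mul_le_mul hAcard hIcard (by positivity) (by positivity)
    _ = (|(b:ℝ)| + 1) * η⁻¹ * (N:ℝ)^2 := by ring
lemma mmv_key (a b : ℤ) (N : ℕ) (η : ℝ)
    (f g : ℤ → ℝ) (hf : ∀ x, |f x| ≤ 1) (hg : ∀ x, |g x| ≤ 1)
    (count_bd : ((((Finset.Ioc ⌊η * N⌋ (N:ℤ) ×ˢ Finset.Icc 1 (N:ℤ)) ×ˢ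
        (Finset.Ioc ⌊η * N⌋ (N:ℤ) ×ˢ Finset.Icc 1 (N:ℤ))).filter
      (fun pq => a * pq.1.1^2 + b * pq.1.2 = a * pq.2.1^2 + b * pq.2.2)).card : ℝ)
      ≤ (|(b:ℝ)| + 1) * η⁻¹ * (N:ℝ)^2) :
    (∫ α in (0:ℝ)..1,
      ‖(∑ x ∈ Finset.Ioc ⌊η * N⌋ (N : ℤ), (f x : ℂ) *
          Complex.exp (2 * Real.pi * Complex.I * (((a : ℝ) * α * (x : ℝ) ^ 2 : ℝ) : ℂ))) *
        (∑ y ∈ Finset.Icc 1 (N : ℤ), (g y : ℂ) *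
          Complex.exp (2 * Real.pi * Complex.I * (((b : ℝ) * α * (y : ℝ) : ℝ) : ℂ)))‖^2)
      ≤ (|(b:ℝ)| + 1) * η⁻¹ * (N:ℝ)^2 := by
  set A : Finset ℤ := Finset.Ioc ⌊η * N⌋ (N:ℤ) with hA
  set B : Finset ℤ := Finset.Icc 1 (N:ℤ) with hB
  set n : ℤ × ℤ → ℤ := fun p => a * p.1^2 + b * p.2 with hn
  set c : ℤ × ℤ → ℝ := fun p => f p.1 * g p.2 with hc
  set S : ℝ → ℂ := fun α => ∑ x ∈ A, (f x : ℂ) *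
      Complex.exp (2 * Real.pi * Complex.I * (((a : ℝ) * α * (x : ℝ) ^ 2 : ℝ) : ℂ)) with hS
  set T : ℝ → ℂ := fun α => ∑ y ∈ B, (g y : ℂ) *
      Complex.exp (2 * Real.pi * Complex.I * (((b : ℝ) * α * (y : ℝ) : ℝ) : ℂ)) with hT
  -- step 1 : product as single sum over P
  have step1 : ∀ α : ℝ, S α * T α = ∑ p ∈ A ×ˢ B, ((c p : ℝ) : ℂ) *
      Complex.exp (2*Real.pi*Complex.I*((n p : ℂ)*(α:ℂ))) := by
    intro α
    rw [hS, hT]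
    rw [Finset.sum_mul_sum, Finset.sum_product]
    apply Finset.sum_congr rfl
    intro x hx
    apply Finset.sum_congr rfl
    intro y hy
    simp only [hc, hn]
    rw [mul_mul_mul_comm, ← Complex.exp_add]
    congr 1
    · push_cast; ring
    · congr 1
      push_cast; ring
  -- step 2 : conjugate
  have step2 : ∀ α : ℝ, (starRingEnd ℂ) (S α * T α) = ∑ p ∈ A ×ˢ B, ((c p : ℝ) : ℂ) *
      Complex.exp (2*Real.pi*Complex.I*(((-(n p) : ℤ) : ℂ)*(α:ℂ))) := by
    intro α
    rw [step1, map_sum]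
    apply Finset.sum_congr rfl
    intro p hp
    rw [map_mul, Complex.conj_ofReal, ← Complex.exp_conj]
    congr 2
    simp only [map_mul, Complex.conj_I, Complex.conj_ofReal, map_ofNat, map_intCast]
    push_cast
    ring
  -- step 3 : norm squared expansion
  have step3 : ∀ α : ℝ, ((‖S α * T α‖^2 : ℝ) : ℂ) = ∑ q ∈ (A ×ˢ B) ×ˢ (A ×ˢ B),
      ((c q.1 * c q.2 : ℝ) : ℂ) *
      Complex.exp (2*Real.pi*Complex.I*(((n q.1 - n q.2 : ℤ) : ℂ)*(α:ℂ))) := by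
    intro α
    have hzz : ((‖S α * T α‖^2 : ℝ) : ℂ) = (S α * T α) * (starRingEnd ℂ) (S α * T α) := by
      rw [Complex.mul_conj]
      norm_cast
      rw [Complex.normSq_eq_norm_sq]
    rw [hzz, step2, step1, Finset.sum_mul_sum]
    conv_rhs => rw [Finset.sum_product]
    apply Finset.sum_congr rfl
    intro p hp
    apply Finset.sum_congr rfl
    intro q hq
    simp only [hc, hn]
    rw [mul_mul_mul_comm, ← Complex.exp_add]
    congr 1
    · push_cast; ring
    · congr 1
      push_cast; ring
  -- integrate
  have hIc : (∫ α in (0:ℝ)..1, ((‖S α * T α‖^2 : ℝ) : ℂ))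
      = ∑ q ∈ (A ×ˢ B) ×ˢ (A ×ˢ B), ((c q.1 * c q.2 : ℝ) : ℂ) *
        (if (n q.1 - n q.2 : ℤ) = 0 then 1 else 0) := by
    rw [intervalIntegral.integral_congr (g := fun α => ∑ q ∈ (A ×ˢ B) ×ˢ (A ×ˢ B),
      ((c q.1 * c q.2 : ℝ) : ℂ) *
      Complex.exp (2*Real.pi*Complex.I*(((n q.1 - n q.2 : ℤ) : ℂ)*(α:ℂ))))
      (fun α _ => step3 α)]
    rw [intervalIntegral.integral_finset_sum]
    · apply Finset.sum_congr rfl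
      intro q hq
      rw [intervalIntegral.integral_const_mul, mmv_orth]
    · intro q hq
      apply Continuous.intervalIntegrable
      fun_prop
  -- real integral equals real part
  have hre : (∫ α in (0:ℝ)..1, ‖S α * T α‖^2)
      = (∫ α in (0:ℝ)..1, ((‖S α * T α‖^2 : ℝ) : ℂ)).re := by
    rw [intervalIntegral.integral_ofReal]
    simp
  rw [hre, hIc]
  -- bound the real part by the count
  have hbd : (∑ q ∈ (A ×ˢ B) ×ˢ (A ×ˢ B), ((c q.1 * c q.2 : ℝ) : ℂ) *
        (if (n q.1 - n q.2 : ℤ) = 0 then 1 else 0)).re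
      ≤ ((((A ×ˢ B) ×ˢ (A ×ˢ B)).filter (fun pq => n pq.1 = n pq.2)).card : ℝ) := by
    calc (∑ q ∈ (A ×ˢ B) ×ˢ (A ×ˢ B), ((c q.1 * c q.2 : ℝ) : ℂ) *
        (if (n q.1 - n q.2 : ℤ) = 0 then 1 else 0)).re
        ≤ ‖∑ q ∈ (A ×ˢ B) ×ˢ (A ×ˢ B), ((c q.1 * c q.2 : ℝ) : ℂ) *
        (if (n q.1 - n q.2 : ℤ) = 0 then 1 else 0)‖ := Complex.re_le_norm _
      _ ≤ ∑ q ∈ (A ×ˢ B) ×ˢ (A ×ˢ B), ‖((c q.1 * c q.2 : ℝ) : ℂ) *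
        (if (n q.1 - n q.2 : ℤ) = 0 then (1:ℂ) else 0)‖ := norm_sum_le _ _
      _ ≤ ∑ q ∈ (A ×ˢ B) ×ˢ (A ×ˢ B), (if n q.1 = n q.2 then (1:ℝ) else 0) := by
          apply Finset.sum_le_sum
          intro q hq
          rw [norm_mul]
          have h1 : ‖((c q.1 * c q.2 : ℝ) : ℂ)‖ ≤ 1 := by
            rw [Complex.norm_real, Real.norm_eq_abs, abs_mul, hc]
            calc |f q.1.1 * g q.1.2| * |f q.2.1 * g q.2.2|
                ≤ 1 * 1 := by
                  apply mul_le_mul _ _ (abs_nonneg _) zero_le_one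
                  · rw [abs_mul]
                    exact mul_le_one₀ (hf _) (abs_nonneg _) (hg _)
                  · rw [abs_mul]
                    exact mul_le_one₀ (hf _) (abs_nonneg _) (hg _)
              _ = 1 := one_mul 1
          have h2 : ‖(if (n q.1 - n q.2 : ℤ) = 0 then (1:ℂ) else 0)‖
              = (if n q.1 = n q.2 then (1:ℝ) else 0) := by
            by_cases h : n q.1 = n q.2
            · rw [if_pos (by omega), if_pos h, norm_one]
            · rw [if_neg (by omega), if_neg h, norm_zero]
          calc ‖((c q.1 * c q.2 : ℝ) : ℂ)‖ * ‖(if (n q.1 - n q.2 : ℤ) = 0 then (1:ℂ) else 0)‖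
              ≤ 1 * ‖(if (n q.1 - n q.2 : ℤ) = 0 then (1:ℂ) else 0)‖ :=
                mul_le_mul_of_nonneg_right h1 (norm_nonneg _)
            _ = (if n q.1 = n q.2 then (1:ℝ) else 0) := by rw [one_mul, h2]
      _ = ((((A ×ˢ B) ×ˢ (A ×ˢ B)).filter (fun pq => n pq.1 = n pq.2)).card : ℝ) := by
          rw [Finset.sum_boole]
  refine hbd.trans ?_
  exact count_bd

/-- Mixed mean value estimate:
`∫_𝕋 |f̃(a₁α) f̃(a₂α) ĝ(b₁α) ĝ(b₂α)| dα ≪_{b₁,b₂} η⁻¹ N²`, where `f̃` is the quadratic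
exponential sum of `f` over `(ηN, N] ∩ ℤ` and `ĝ` the linear exponential sum of `g` over `[N]`. -/
theorem mixed_mean_value :
    ∀ b₁ b₂ : ℤ, b₁ ≠ 0 → b₂ ≠ 0 → ∃ C : ℝ, 0 < C ∧
      ∀ (a₁ a₂ : ℤ), a₁ ≠ 0 → a₂ ≠ 0 → ∀ (N : ℕ) (η : ℝ), η ∈ Set.Ioo (0 : ℝ) 1 →
        ∀ f g : ℤ → ℝ, (∀ x, |f x| ≤ 1) → (∀ x, |g x| ≤ 1) →
          (∫ α in (0 : ℝ)..1,
            ‖(∑ x ∈ Finset.Ioc ⌊η * N⌋ (N : ℤ), (f x : ℂ) *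
                Complex.exp (2 * Real.pi * Complex.I * (((a₁ : ℝ) * α * (x : ℝ) ^ 2 : ℝ) : ℂ))) *
              (∑ x ∈ Finset.Ioc ⌊η * N⌋ (N : ℤ), (f x : ℂ) *
                Complex.exp (2 * Real.pi * Complex.I * (((a₂ : ℝ) * α * (x : ℝ) ^ 2 : ℝ) : ℂ))) *
              (∑ y ∈ Finset.Icc 1 (N : ℤ), (g y : ℂ) *
                Complex.exp (2 * Real.pi * Complex.I * (((b₁ : ℝ) * α * (y : ℝ) : ℝ) : ℂ))) *
              (∑ y ∈ Finset.Icc 1 (N : ℤ), (g y : ℂ) *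
                Complex.exp (2 * Real.pi * Complex.I * (((b₂ : ℝ) * α * (y : ℝ) : ℝ) : ℂ)))‖) ≤
          C * η⁻¹ * (N : ℝ) ^ 2 := by
  intro b₁ b₂ hb₁ hb₂
  refine ⟨|(b₁:ℝ)| + |(b₂:ℝ)| + 2, by positivity, ?_⟩
  intro a₁ a₂ ha₁ ha₂ N η hη f g hf hg
  set A : Finset ℤ := Finset.Ioc ⌊η * N⌋ (N:ℤ) with hA
  set B : Finset ℤ := Finset.Icc 1 (N:ℤ) with hB
  set S₁ : ℝ → ℂ := fun α => ∑ x ∈ A, (f x : ℂ) *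
      Complex.exp (2 * Real.pi * Complex.I * (((a₁ : ℝ) * α * (x : ℝ) ^ 2 : ℝ) : ℂ)) with hS₁
  set S₂ : ℝ → ℂ := fun α => ∑ x ∈ A, (f x : ℂ) *
      Complex.exp (2 * Real.pi * Complex.I * (((a₂ : ℝ) * α * (x : ℝ) ^ 2 : ℝ) : ℂ)) with hS₂
  set T₁ : ℝ → ℂ := fun α => ∑ y ∈ B, (g y : ℂ) *
      Complex.exp (2 * Real.pi * Complex.I * (((b₁ : ℝ) * α * (y : ℝ) : ℝ) : ℂ)) with hT₁
  set T₂ : ℝ → ℂ := fun α => ∑ y ∈ B, (g y : ℂ) *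
      Complex.exp (2 * Real.pi * Complex.I * (((b₂ : ℝ) * α * (y : ℝ) : ℝ) : ℂ)) with hT₂
  have key₁ := mmv_key a₁ b₁ N η f g hf hg (mmv_count a₁ b₁ ha₁ hb₁ N η hη)
  have key₂ := mmv_key a₂ b₂ N η f g hf hg (mmv_count a₂ b₂ ha₂ hb₂ N η hη)
  have hpt : ∀ α ∈ Set.Icc (0:ℝ) 1, ‖S₁ α * S₂ α * T₁ α * T₂ α‖
      ≤ (1/2) * ‖S₁ α * T₁ α‖^2 + (1/2) * ‖S₂ α * T₂ α‖^2 := by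
    intro α _
    have h1 : S₁ α * S₂ α * T₁ α * T₂ α = (S₁ α * T₁ α) * (S₂ α * T₂ α) := by ring
    rw [h1, norm_mul]
    nlinarith [sq_nonneg (‖S₁ α * T₁ α‖ - ‖S₂ α * T₂ α‖), norm_nonneg (S₁ α * T₁ α),
      norm_nonneg (S₂ α * T₂ α)]
  have hint1 : IntervalIntegrable (fun α => ‖S₁ α * S₂ α * T₁ α * T₂ α‖)
      MeasureTheory.volume 0 1 := by
    apply Continuous.intervalIntegrable
    rw [hS₁, hS₂, hT₁, hT₂]
    fun_prop
  have hintu : IntervalIntegrable (fun α => ‖S₁ α * T₁ α‖^2) MeasureTheory.volume 0 1 := by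
    apply Continuous.intervalIntegrable
    rw [hS₁, hT₁]
    fun_prop
  have hintv : IntervalIntegrable (fun α => ‖S₂ α * T₂ α‖^2) MeasureTheory.volume 0 1 := by
    apply Continuous.intervalIntegrable
    rw [hS₂, hT₂]
    fun_prop
  have hint2 : IntervalIntegrable
      (fun α => (1/2) * ‖S₁ α * T₁ α‖^2 + (1/2) * ‖S₂ α * T₂ α‖^2)
      MeasureTheory.volume 0 1 :=
    (hintu.const_mul _).add (hintv.const_mul _)
  have hmono := intervalIntegral.integral_mono_on (by norm_num : (0:ℝ) ≤ 1) hint1 hint2 hpt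
  have hsplit : (∫ α in (0:ℝ)..1,
      ((1/2) * ‖S₁ α * T₁ α‖^2 + (1/2) * ‖S₂ α * T₂ α‖^2))
      = (1/2) * (∫ α in (0:ℝ)..1, ‖S₁ α * T₁ α‖^2)
        + (1/2) * (∫ α in (0:ℝ)..1, ‖S₂ α * T₂ α‖^2) := by
    rw [intervalIntegral.integral_add (hintu.const_mul _) (hintv.const_mul _),
      intervalIntegral.integral_const_mul, intervalIntegral.integral_const_mul]
  rw [hsplit] at hmono
  have hfin : (1/2) * (∫ α in (0:ℝ)..1, ‖S₁ α * T₁ α‖^2)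
        + (1/2) * (∫ α in (0:ℝ)..1, ‖S₂ α * T₂ α‖^2)
      ≤ (|(b₁:ℝ)| + |(b₂:ℝ)| + 2) * η⁻¹ * (N:ℝ)^2 := by
    have ht : (0:ℝ) ≤ η⁻¹ * (N:ℝ)^2 := by
      have : (0:ℝ) < η := hη.1
      positivity
    have hC : (1/2) * (|(b₁:ℝ)| + 1) + (1/2) * (|(b₂:ℝ)| + 1) ≤ |(b₁:ℝ)| + |(b₂:ℝ)| + 2 := by
      nlinarith [abs_nonneg (b₁:ℝ), abs_nonneg (b₂:ℝ)]
    calc (1/2) * (∫ α in (0:ℝ)..1, ‖S₁ α * T₁ α‖^2)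
        + (1/2) * (∫ α in (0:ℝ)..1, ‖S₂ α * T₂ α‖^2)
        ≤ (1/2) * ((|(b₁:ℝ)| + 1) * η⁻¹ * (N:ℝ)^2)
          + (1/2) * ((|(b₂:ℝ)| + 1) * η⁻¹ * (N:ℝ)^2) := by
          apply add_le_add <;> apply mul_le_mul_of_nonneg_left _ (by norm_num : (0:ℝ) ≤ 1/2)
          · exact key₁
          · exact key₂
      _ = ((1/2) * (|(b₁:ℝ)| + 1) + (1/2) * (|(b₂:ℝ)| + 1)) * (η⁻¹ * (N:ℝ)^2) := by ring
      _ ≤ (|(b₁:ℝ)| + |(b₂:ℝ)| + 2) * (η⁻¹ * (N:ℝ)^2) :=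
          mul_le_mul_of_nonneg_right hC ht
      _ = (|(b₁:ℝ)| + |(b₂:ℝ)| + 2) * η⁻¹ * (N:ℝ)^2 := by ring
  exact hmono.trans hfin
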